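/- Let s be a positive integer, L a lattice of rank n with basis w₁,…,w_n, and u₁,…,u_N the distinct vectors in the dual L* of norm at most s. Then L is s-integrable (√s·L embeds isometrically into some ℤ^m) if and only if the system ∑_{k=1}^N ⟨wᵢ+w_j, u_k⟩² x_k = s⟨wᵢ+w_j, wᵢ+w_j⟩ for all 1 ≤ i, j ≤ n has a solution in non-negative integers (x₁,…,x_N). -/

import Mathlib

open scoped RealInnerProductSpace

/-- Let `L` be the lattice with basis `w₁,…,w_n` (integral inner products) and let
`u₁,…,u_N` be the distinct vectors of the dual `L*` of norm at most `s`.  Then `L` is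
`s`-integrable (`√s·L` embeds isometrically in some `ℤ^m`) iff the system
`∑_k ⟪wᵢ+w_j, u_k⟫² x_k = s⟪wᵢ+w_j, wᵢ+w_j⟫` has a solution in non-negative integers. -/
theorem stmt_16 (n N s : ℕ) (hs : 0 < s)
    (w : Fin n → EuclideanSpace ℝ (Fin n)) (hli : LinearIndependent ℝ w)
    (hint : ∀ i j, ∃ k : ℤ, ⟪w i, w j⟫ = (k : ℝ))
    (u : Fin N → EuclideanSpace ℝ (Fin n)) (hinj : Function.Injective u)
    (hu : ∀ v : EuclideanSpace ℝ (Fin n),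
      ((∀ i, ∃ k : ℤ, ⟪v, w i⟫ = (k : ℝ)) ∧ ⟪v, v⟫ ≤ s) ↔ ∃ k, v = u k) :
    (∃ (m : ℕ) (f : EuclideanSpace ℝ (Fin n) →ₗᵢ[ℝ] EuclideanSpace ℝ (Fin m)),
      ∀ i, ∀ t, ∃ k : ℤ, f (Real.sqrt s • w i) t = (k : ℝ)) ↔
    (∃ x : Fin N → ℕ, ∀ i j,
      ∑ k, ⟪w i + w j, u k⟫ ^ 2 * (x k : ℝ) =
        s * ⟪w i + w j, w i + w j⟫) := by
  have hs' : (0:ℝ) < s := by exact_mod_cast hs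
  have hsqrt : Real.sqrt s ^ 2 = s := Real.sq_sqrt hs'.le
  have hsqrt0 : Real.sqrt s ≠ 0 := by positivity
  rcases Nat.eq_zero_or_pos n with rfl | hn
  · constructor
    · intro _
      exact ⟨fun _ => 0, fun i => i.elim0⟩
    · intro _
      exact ⟨0, LinearIsometry.id, fun i => i.elim0⟩
  have hn : Nonempty (Fin n) := ⟨⟨0, hn⟩⟩
  constructor
  · -- forward direction
    rintro ⟨m, f, hf⟩
    set g := LinearMap.adjoint f.toLinearMap with hg
    set σ : Fin m → EuclideanSpace ℝ (Fin n) :=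
      fun t => g (EuclideanSpace.single t (Real.sqrt s)) with hσ
    have hσinner : ∀ (v : EuclideanSpace ℝ (Fin n)) (t : Fin m),
        ⟪σ t, v⟫ = Real.sqrt s * f v t := by
      intro v t
      have : ⟪g (EuclideanSpace.single t (Real.sqrt s)), v⟫
          = ⟪(EuclideanSpace.single t (Real.sqrt s) : EuclideanSpace ℝ (Fin m)), f v⟫ :=
        LinearMap.adjoint_inner_left _ _ _
      rw [hσ]
      rw [this, EuclideanSpace.inner_single_left]
      simp
    have heut : ∀ v : EuclideanSpace ℝ (Fin n),
        ∑ t, ⟪σ t, v⟫ ^ 2 = s * ⟪v, v⟫ := by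
      intro v
      have h1 : ⟪f v, f v⟫ = ⟪v, v⟫ := f.inner_map_map v v
      have h2 : ⟪f v, f v⟫ = ∑ t, f v t * f v t := by
        rw [PiLp.inner_apply]; simp [RCLike.inner_apply]; simp only [sq]
      calc ∑ t, ⟪σ t, v⟫ ^ 2 = ∑ t, s * (f v t * f v t) := by
            refine Finset.sum_congr rfl fun t _ => ?_
            rw [hσinner, mul_pow, hsqrt]; ring
        _ = s * ⟪f v, f v⟫ := by rw [h2, Finset.mul_sum]
        _ = s * ⟪v, v⟫ := by rw [h1]
    have hσint : ∀ (t : Fin m) (i : Fin n), ∃ k : ℤ, ⟪σ t, w i⟫ = (k : ℝ) := by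
      intro t i
      obtain ⟨k, hk⟩ := hf i t
      refine ⟨k, ?_⟩
      rw [hσinner]
      rw [← hk, f.map_smul]
      simp [PiLp.smul_apply]
    have hσle : ∀ t, ⟪σ t, σ t⟫ ≤ (s : ℝ) := by
      intro t
      have h := heut (σ t)
      have hterm : ⟪σ t, σ t⟫ ^ 2 ≤ ∑ t', ⟪σ t', σ t⟫ ^ 2 :=
        Finset.single_le_sum (f := fun t' => ⟪σ t', σ t⟫ ^ 2)
          (fun _ _ => sq_nonneg _) (Finset.mem_univ t)
      have hnn : (0:ℝ) ≤ ⟪σ t, σ t⟫ := real_inner_self_nonneg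
      nlinarith [hterm, h, hnn]
    have hk : ∀ t, ∃ k, σ t = u k := fun t => (hu (σ t)).1 ⟨hσint t, hσle t⟩
    choose κ hκ using hk
    classical
    refine ⟨fun k => (Finset.univ.filter (fun t => κ t = k)).card, fun i j => ?_⟩
    have key : ∀ v : EuclideanSpace ℝ (Fin n),
        ∑ k, ⟪v, u k⟫ ^ 2 * ((Finset.univ.filter (fun t => κ t = k)).card : ℝ)
          = s * ⟪v, v⟫ := by
      intro v
      rw [← heut v]
      have hfib := Finset.sum_fiberwise' (Finset.univ : Finset (Fin m)) κ
        (fun k => ⟪v, u k⟫ ^ 2)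
      calc ∑ k, ⟪v, u k⟫ ^ 2 * ((Finset.univ.filter (fun t => κ t = k)).card : ℝ)
          = ∑ k, ∑ _t ∈ Finset.univ.filter (fun t => κ t = k), ⟪v, u k⟫ ^ 2 := by
            refine Finset.sum_congr rfl fun k _ => ?_
            rw [Finset.sum_const, nsmul_eq_mul, mul_comm]
        _ = ∑ t, ⟪v, u (κ t)⟫ ^ 2 := hfib
        _ = ∑ t, ⟪σ t, v⟫ ^ 2 := by
            refine Finset.sum_congr rfl fun t _ => ?_
            rw [← hκ t, real_inner_comm]
    exact key (w i + w j)
  · -- backward direction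
    rintro ⟨x, hx⟩
    classical
    haveI : Nonempty (Fin n) := hn
    -- S p q := ∑ k, ⟪w p, u k⟫ ⟪w q, u k⟫ x k
    set S : Fin n → Fin n → ℝ :=
      fun p q => ∑ k, ⟪w p, u k⟫ * ⟪w q, u k⟫ * (x k : ℝ) with hS
    have expand : ∀ p q : Fin n,
        ∑ k, ⟪w p + w q, u k⟫ ^ 2 * (x k : ℝ) = S p p + 2 * S p q + S q q := by
      intro p q
      rw [hS]
      simp only
      rw [Finset.mul_sum, ← Finset.sum_add_distrib, ← Finset.sum_add_distrib]
      refine Finset.sum_congr rfl fun k _ => ?_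
      rw [inner_add_left]; ring
    have hdiag : ∀ i, S i i = s * ⟪w i, w i⟫ := by
      intro i
      have h := hx i i
      rw [expand i i, real_inner_add_add_self] at h
      linarith
    have hA : ∀ i j, S i j = s * ⟪w i, w j⟫ := by
      intro i j
      have h := hx i j
      rw [expand i j, real_inner_add_add_self] at h
      have h1 := hdiag i
      have h2 := hdiag j
      linarith
    -- the eutactic identity for all vectors, via a linear operator argument
    have hcard : Fintype.card (Fin n)
        = Module.finrank ℝ (EuclideanSpace ℝ (Fin n)) := by simp
    let b : Module.Basis (Fin n) ℝ (EuclideanSpace ℝ (Fin n)) :=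
      basisOfLinearIndependentOfCardEqFinrank hli hcard
    have hb : ⇑b = w := coe_basisOfLinearIndependentOfCardEqFinrank hli hcard
    have hspan : Submodule.span ℝ (Set.range w) = ⊤ := by
      rw [← hb]; exact b.span_eq
    have hext : ∀ z : EuclideanSpace ℝ (Fin n), (∀ i, ⟪w i, z⟫ = 0) → z = 0 := by
      intro z hz
      have hz' : z ∈ (Submodule.span ℝ (Set.range w))ᗮ := by
        rw [Submodule.mem_orthogonal]
        intro p hp
        induction hp using Submodule.span_induction with
        | mem p hp => obtain ⟨i, rfl⟩ := hp; exact hz i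
        | zero => simp
        | add p q _ _ hp hq => rw [inner_add_left, hp, hq, add_zero]
        | smul c p _ hp => rw [inner_smul_left, hp, mul_zero]
      rw [hspan, Submodule.top_orthogonal_eq_bot] at hz'
      simpa using hz'
    set T : EuclideanSpace ℝ (Fin n) →L[ℝ] EuclideanSpace ℝ (Fin n) :=
      ∑ k, (x k : ℝ) • ((innerSL ℝ (u k)).smulRight (u k)) with hT
    have hTapply : ∀ (v v' : EuclideanSpace ℝ (Fin n)),
        ⟪v, T v'⟫ = ∑ k, ⟪v, u k⟫ * ⟪v', u k⟫ * (x k : ℝ) := by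
      intro v v'
      rw [hT, ContinuousLinearMap.sum_apply, inner_sum]
      refine Finset.sum_congr rfl fun k _ => ?_
      rw [ContinuousLinearMap.smul_apply, ContinuousLinearMap.smulRight_apply,
        innerSL_apply_apply, real_inner_smul_right, real_inner_smul_right,
        real_inner_comm (u k) v']
      ring
    have hTw : ∀ j, T (w j) = (s : ℝ) • w j := by
      intro j
      have : ∀ i, ⟪w i, T (w j) - (s : ℝ) • w j⟫ = 0 := by
        intro i
        rw [inner_sub_right, hTapply, real_inner_smul_right]
        have := hA i j
        rw [hS] at this
        simp only at this
        rw [this]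
        ring
      have := hext _ this
      rwa [sub_eq_zero] at this
    have hTall : ∀ v : EuclideanSpace ℝ (Fin n), T v = (s : ℝ) • v := by
      intro v
      have : (T : EuclideanSpace ℝ (Fin n) →ₗ[ℝ] EuclideanSpace ℝ (Fin n))
          = (s : ℝ) • LinearMap.id := by
        apply b.ext
        intro i
        rw [hb]
        simpa using hTw i
      have := LinearMap.congr_fun this v
      simpa using this
    have key : ∀ v v' : EuclideanSpace ℝ (Fin n),
        ∑ k, ⟪v, u k⟫ * ⟪v', u k⟫ * (x k : ℝ) = s * ⟪v, v'⟫ := by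
      intro v v'
      rw [← hTapply, hTall, real_inner_smul_right]
    -- build the embedding
    let m : ℕ := ∑ k, x k
    have hcardm : Fintype.card (Σ k : Fin N, Fin (x k)) = m := by
      simp [m, Fintype.card_sigma]
    let e : (Σ k : Fin N, Fin (x k)) ≃ Fin m := Fintype.equivFinOfCardEq hcardm
    let g : EuclideanSpace ℝ (Fin n) →ₗ[ℝ] EuclideanSpace ℝ (Fin m) :=
      { toFun := fun v => WithLp.toLp 2 (fun t => (Real.sqrt s)⁻¹ * ⟪v, u (e.symm t).1⟫)
        map_add' := by
          intro v v'
          ext t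
          simp only [inner_add_left, PiLp.add_apply, PiLp.toLp_apply]
          ring
        map_smul' := by
          intro c v
          ext t
          simp only [inner_smul_left, PiLp.smul_apply, PiLp.toLp_apply, RingHom.id_apply,
            starRingEnd_apply, star_trivial, smul_eq_mul]
          ring }
    have hgapply : ∀ (v : EuclideanSpace ℝ (Fin n)) (t : Fin m),
        g v t = (Real.sqrt s)⁻¹ * ⟪v, u (e.symm t).1⟫ := fun _ _ => rfl
    have hinner : ∀ v v' : EuclideanSpace ℝ (Fin n), ⟪g v, g v'⟫ = ⟪v, v'⟫ := by
      intro v v'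
      rw [PiLp.inner_apply]
      simp only [RCLike.inner_apply, starRingEnd_apply, star_trivial]
      have : ∀ t : Fin m, g v t * g v' t
          = (s : ℝ)⁻¹ * (⟪v, u (e.symm t).1⟫ * ⟪v', u (e.symm t).1⟫) := by
        intro t
        rw [hgapply, hgapply,
          show ((s:ℝ))⁻¹ = (Real.sqrt s)⁻¹ * (Real.sqrt s)⁻¹ from by
            rw [← mul_inv, Real.mul_self_sqrt hs'.le]]
        ring
      rw [Finset.sum_congr rfl fun t _ => (mul_comm (g v' t) (g v t)).trans (this t)]
      rw [← Finset.mul_sum]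
      have hsum : ∑ t : Fin m, ⟪v, u (e.symm t).1⟫ * ⟪v', u (e.symm t).1⟫
          = ∑ k, ⟪v, u k⟫ * ⟪v', u k⟫ * (x k : ℝ) := by
        rw [← Equiv.sum_comp e (fun t => ⟪v, u (e.symm t).1⟫ * ⟪v', u (e.symm t).1⟫)]
        simp only [Equiv.symm_apply_apply]
        rw [← Finset.univ_sigma_univ, Finset.sum_sigma]
        refine Finset.sum_congr rfl fun k _ => ?_
        simp [Finset.sum_const, Finset.card_univ, mul_comm]
      rw [hsum, key v v', ← mul_assoc, inv_mul_cancel₀ (ne_of_gt hs'), one_mul]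
    refine ⟨m, g.isometryOfInner hinner, fun i t => ?_⟩
    have hui : ∀ k i, ∃ z : ℤ, ⟪u k, w i⟫ = (z : ℝ) := by
      intro k i
      exact ((hu (u k)).2 ⟨k, rfl⟩).1 i
    obtain ⟨z, hz⟩ := hui (e.symm t).1 i
    refine ⟨z, ?_⟩
    rw [LinearMap.coe_isometryOfInner]
    rw [hgapply, real_inner_smul_left, real_inner_comm, hz,
      ← mul_assoc, inv_mul_cancel₀ hsqrt0, one_mul]
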